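/- Let N+ be a rooted binary phylogenetic network on taxon set X with |X| ≥ 4, and let {a,b,c,d} ⊆ X be a set of four taxa that is not a B-quartet on N+. Then there is an edge of the tree of blobs of N− whose deletion disconnects exactly two of the taxa a,b,c,d from the other two; consequently the reduced unrooted tree of blobs T_rd(N−) displays a resolved quartet tree on {a,b,c,d}. -/

import Mathlib

/-!
# Common framework

Finite directed multigraphs, undirected connectivity, numbers of connected
components, cut edges, subgraphs, blobs, blobs determined by leaf sets,
B-quartets, and quartets displayed via cut-edge separation.

A *network* is modelled as a finite directed multigraph (edge directions are
simply ignored for the undirected notions of connectivity, cut edges and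
blobs).
-/

/-- A finite directed multigraph: finite types of nodes and of edges, with
source and target maps. -/
structure MDigraph where
  V : Type
  E : Type
  finV : Finite V
  finE : Finite E
  src : E → V
  tgt : E → V

attribute [instance] MDigraph.finV MDigraph.finE

namespace MDigraph

section Basic

variable (G : MDigraph)

/-- One undirected step between `u` and `v` along an edge from the set `F`. -/
def Step (F : Set G.E) (u v : G.V) : Prop :=
  ∃ e ∈ F, (G.src e = u ∧ G.tgt e = v) ∨ (G.src e = v ∧ G.tgt e = u)

/-- Undirected reachability (an undirected path) using only edges in `F`. -/
def Conn (F : Set G.E) (u v : G.V) : Prop :=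
  Relation.ReflTransGen (G.Step F) u v

/-- One directed step from `u` to `v` along an edge from the set `F`. -/
def DStep (F : Set G.E) (u v : G.V) : Prop :=
  ∃ e ∈ F, G.src e = u ∧ G.tgt e = v

/-- Directed reachability (a directed path) using only edges in `F`. -/
def DConn (F : Set G.E) (u v : G.V) : Prop :=
  Relation.ReflTransGen (G.DStep F) u v

/-- `u` is above (ancestral to) `v`: there is a directed path from `u` to `v`. -/
def Above (u v : G.V) : Prop := G.DConn Set.univ u v

/-- In-degree of a node. -/
noncomputable def inDeg (v : G.V) : ℕ := Nat.card {e : G.E // G.tgt e = v}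

/-- Out-degree of a node. -/
noncomputable def outDeg (v : G.V) : ℕ := Nat.card {e : G.E // G.src e = v}

/-- Undirected degree of a node (a loop counts twice). -/
noncomputable def degree (v : G.V) : ℕ := G.inDeg v + G.outDeg v

/-- The number of connected components of the graph with node set `W` and edge
set the restriction to `W` of `F` (two nodes of `W` lie in the same connected
component iff they are joined by an undirected path). -/
noncomputable def numComponents (W : Set G.V) (F : Set G.E) : ℕ :=
  Nat.card (Quot (fun u v : W => G.Step {e ∈ F | G.src e ∈ W ∧ G.tgt e ∈ W} u.1 v.1))

/-- `v` lies on every directed path from `u` to `w`: there is no directed path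
from `u` to `w` all of whose nodes avoid `v`. -/
def OnEveryPath (v u w : G.V) : Prop :=
  ¬ (u ≠ v ∧ w ≠ v ∧
      Relation.ReflTransGen (fun a b => G.DStep Set.univ a b ∧ a ≠ v ∧ b ≠ v) u w)

end Basic

/-- A subgraph (subnetwork): a set of nodes together with a set of edges
joining them. -/
structure Subgraph (G : MDigraph) where
  verts : Set G.V
  edges : Set G.E
  src_mem : ∀ e ∈ edges, G.src e ∈ verts
  tgt_mem : ∀ e ∈ edges, G.tgt e ∈ verts

/-- The whole graph, as a subgraph of itself. -/
def top (G : MDigraph) : Subgraph G :=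
  ⟨Set.univ, Set.univ, fun _ _ => Set.mem_univ _, fun _ _ => Set.mem_univ _⟩

namespace Subgraph

variable {G : MDigraph}

/-- Containment of subgraphs. -/
def le (H K : Subgraph G) : Prop := H.verts ⊆ K.verts ∧ H.edges ⊆ K.edges

/-- The subgraph `H` is connected. -/
def IsConnected (H : Subgraph G) : Prop :=
  H.verts.Nonempty ∧ ∀ u ∈ H.verts, ∀ v ∈ H.verts, G.Conn H.edges u v

/-- Delete an edge from a subgraph. -/
def deleteEdge (H : Subgraph G) (e : G.E) : Subgraph G :=
  ⟨H.verts, H.edges \ {e}, fun e' he' => H.src_mem e' he'.1,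
    fun e' he' => H.tgt_mem e' he'.1⟩

/-- The number of connected components of a subgraph. -/
noncomputable def numComponents (H : Subgraph G) : ℕ :=
  G.numComponents H.verts H.edges

/-- `e` is a cut edge of the (sub)graph `H`: deleting it increases the number
of connected components. -/
def IsCutEdge (H : Subgraph G) (e : G.E) : Prop :=
  e ∈ H.edges ∧ H.numComponents < (H.deleteEdge e).numComponents

end Subgraph

variable {G : MDigraph}

/-- `B` is a blob of the network `H`: a maximal connected subnetwork of `H`
having no cut edges.  (A blob is *trivial* if it consists of a single node.) -/
def IsBlobIn (H B : Subgraph G) : Prop :=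
  B.le H ∧ B.IsConnected ∧ (∀ e, ¬ B.IsCutEdge e) ∧
    ∀ B' : Subgraph G, B'.le H → B'.IsConnected → (∀ e, ¬ B'.IsCutEdge e) →
      B.le B' → B'.le B

/-- `e` is a cut edge of the network `H` incident to the blob `B`: exactly one
of its endpoints is a node of `B`. -/
def IncidentCut (H B : Subgraph G) (e : G.E) : Prop :=
  H.IsCutEdge e ∧ Xor' (G.src e ∈ B.verts) (G.tgt e ∈ B.verts)

/-- The blob `B` of the network `H` is determined by the set `S` of leaf
labels: deletion of the cut edges of `H` incident to `B` leaves the nodes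
labelled by the elements of `S` in distinct connected components. -/
def DeterminesIn {X : Type} (H B : Subgraph G) (leaf : X → G.V) (S : Set X) : Prop :=
  ∀ s ∈ S, ∀ t ∈ S, s ≠ t →
    ¬ G.Conn {e ∈ H.edges | ¬ IncidentCut H B e} (leaf s) (leaf t)

/-- Four taxa form a B-quartet on the network `H`: some blob of `H` is
determined by them. -/
def BQuartetIn {X : Type} (H : Subgraph G) (leaf : X → G.V) (a b c d : X) : Prop :=
  ∃ B : Subgraph G, IsBlobIn H B ∧ DeterminesIn H B leaf ({a, b, c, d} : Set X)

/-- Some cut edge of `H` separates the taxa `p, q` from the taxa `r, s`: after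
its deletion `p, q` lie in one connected component and `r, s` in another.  For
a 4-taxon set `{p,q,r,s}` this says exactly that the (reduced unrooted) tree of
blobs of `H` displays the resolved quartet `pq|rs` (the edges of the tree of
blobs correspond exactly to the cut edges of the network, and suppressing
degree-2 nodes or contracting blobs does not affect which taxa a cut edge
separates). -/
def CutSep {X : Type} (H : Subgraph G) (leaf : X → G.V) (p q r s : X) : Prop :=
  ∃ e, H.IsCutEdge e ∧
    G.Conn (H.edges \ {e}) (leaf p) (leaf q) ∧
    G.Conn (H.edges \ {e}) (leaf r) (leaf s) ∧
    ¬ G.Conn (H.edges \ {e}) (leaf p) (leaf r)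

end MDigraph
open MDigraph in
/-- A rooted binary phylogenetic network on the taxon set `X`: a connected
directed acyclic graph whose node set consists of a root (in-degree 0,
out-degree 2), leaves (in-degree 1, out-degree 0) bijectively labelled by `X`,
tree nodes (in-degree 1, out-degree 2) and hybrid nodes (in-degree 2,
out-degree 1). -/
structure PhyloNetwork (X : Type) extends MDigraph where
  root : toMDigraph.V
  leaf : X → toMDigraph.V
  leaf_inj : Function.Injective leaf
  root_in : toMDigraph.inDeg root = 0
  root_out : toMDigraph.outDeg root = 2
  leaf_in : ∀ x, toMDigraph.inDeg (leaf x) = 1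
  leaf_out : ∀ x, toMDigraph.outDeg (leaf x) = 0
  internal : ∀ v, v ≠ root → (∀ x, v ≠ leaf x) →
      (toMDigraph.inDeg v = 1 ∧ toMDigraph.outDeg v = 2) ∨
      (toMDigraph.inDeg v = 2 ∧ toMDigraph.outDeg v = 1)
  acyclic : ∀ v, ¬ Relation.TransGen (toMDigraph.DStep Set.univ) v v
  conn : ∀ u v, toMDigraph.Conn Set.univ u v

namespace PhyloNetwork

open MDigraph

variable {X : Type} (N : PhyloNetwork X)

/-- The subnetwork of `N⁺` consisting of all nodes and edges ancestral to at
least one taxon in `Y`.  Since suppressing nodes of in- and out-degree 1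
affects neither blobs, nor cut edges, nor which sets of taxa they separate,
this subnetwork faithfully represents the induced network `N⁺_Y`. -/
def inducedSub (Y : Set X) : Subgraph N.toMDigraph where
  verts := {v | ∃ y ∈ Y, N.toMDigraph.Above v (N.leaf y)}
  edges := {e | ∃ y ∈ Y, N.toMDigraph.Above (N.toMDigraph.tgt e) (N.leaf y)}
  src_mem := by
    rintro e ⟨y, hy, h⟩
    exact ⟨y, hy, Relation.ReflTransGen.head ⟨e, Set.mem_univ e, rfl, rfl⟩ h⟩
  tgt_mem := by
    rintro e ⟨y, hy, h⟩
    exact ⟨y, hy, h⟩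

/-- `v` is a stable ancestor of the leaves: it is ancestral to every leaf and
lies on every directed path from the root to any leaf. -/
def IsStableAncestor (v : N.toMDigraph.V) : Prop :=
  (∀ x, N.toMDigraph.Above v (N.leaf x)) ∧
  ∀ x, N.toMDigraph.OnEveryPath v N.root (N.leaf x)

/-- `v` is the lowest stable ancestor (LSA) of the network: a stable ancestor
below all stable ancestors. -/
def IsLSA (v : N.toMDigraph.V) : Prop :=
  N.IsStableAncestor v ∧ ∀ u, N.IsStableAncestor u → N.toMDigraph.Above u v

/-- The number of cut edges of `N⁺` incident to the blob `B`. -/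
noncomputable def blobDeg (B : Subgraph N.toMDigraph) : ℕ :=
  Nat.card {e : N.toMDigraph.E // IncidentCut (top N.toMDigraph) B e}

/-- `B` is an `m`-blob of the rooted network `N⁺`: if the root is not in `B`
then `B` has exactly `m` incident cut edges, while if the root is in `B` then
`B` has exactly `m - 1` incident cut edges. -/
def IsMBlob (B : Subgraph N.toMDigraph) (m : ℕ) : Prop :=
  IsBlobIn (top N.toMDigraph) B ∧
    ((N.root ∈ B.verts ∧ m = N.blobDeg B + 1) ∨ (N.root ∉ B.verts ∧ m = N.blobDeg B))

end PhyloNetwork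

open MDigraph

/-! ### Auxiliary development for Statement 11 -/

namespace MDigraph

variable {G : MDigraph}

/-- Undirected incidence of an edge with an ordered pair of endpoints. -/
def Ortn (G : MDigraph) (e : G.E) (u v : G.V) : Prop :=
  (G.src e = u ∧ G.tgt e = v) ∨ (G.src e = v ∧ G.tgt e = u)

theorem Ortn.symm {e : G.E} {u v : G.V} (h : Ortn G e u v) : Ortn G e v u := Or.symm h

theorem Conn.trans {F : Set G.E} {u v w : G.V} (h1 : G.Conn F u v) (h2 : G.Conn F v w) :
    G.Conn F u w := Relation.ReflTransGen.trans h1 h2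

theorem conn_symm {F : Set G.E} {u v : G.V} (h : G.Conn F u v) : G.Conn F v u := by
  refine ((show Std.Symm (G.Step F) → Std.Symm (Relation.ReflTransGen (G.Step F)) from
    fun _ => inferInstance) ⟨?_⟩).symm _ _ h
  rintro x y ⟨e, he, ho⟩
  exact ⟨e, he, Or.symm ho⟩

theorem Conn.symm {F : Set G.E} {u v : G.V} (h : G.Conn F u v) : G.Conn F v u := conn_symm h

theorem conn_mono {F F' : Set G.E} (hFF : F ⊆ F') {u v : G.V} (h : G.Conn F u v) :
    G.Conn F' u v := by
  refine Relation.ReflTransGen.mono ?_ _ _ h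
  rintro x y ⟨e, he, ho⟩
  exact ⟨e, hFF he, ho⟩

/-- `u` and `v` are on the same side of `e`: connected while avoiding `e`. -/
def SS (G : MDigraph) (e : G.E) (u v : G.V) : Prop := G.Conn {e}ᶜ u v

theorem SS.refl {e : G.E} {u : G.V} : G.SS e u u := Relation.ReflTransGen.refl

theorem SS.symm {e : G.E} {u v : G.V} (h : G.SS e u v) : G.SS e v u := conn_symm h

theorem SS.trans {e : G.E} {u v w : G.V} (h1 : G.SS e u v) (h2 : G.SS e v w) : G.SS e u w :=
  Relation.ReflTransGen.trans h1 h2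

theorem ss_step {eA eU : G.E} (hne : eU ≠ eA) {u v : G.V} (h : Ortn G eU u v) : G.SS eA u v :=
  Relation.ReflTransGen.single ⟨eU, Set.mem_compl_singleton_iff.mpr hne, h⟩

/-- The set of edges lying on a cycle (non-cut edges). -/
def NCset (G : MDigraph) : Set G.E := {e | G.SS e (G.src e) (G.tgt e)}

/-! ### Walks -/

inductive Walk (G : MDigraph) : G.V → G.V → List G.E → Prop
  | nil (v : G.V) : Walk G v v []
  | cons {u v w : G.V} {e : G.E} {l : List G.E} (h : Ortn G e u v) (hw : Walk G v w l) :
      Walk G u w (e :: l)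

theorem Walk.append {u v w : G.V} {l1 l2 : List G.E} (h1 : Walk G u v l1) :
    Walk G v w l2 → Walk G u w (l1 ++ l2) := by
  induction h1 with
  | nil _ => intro h2; simpa using h2
  | cons h hw ih => intro h2; exact Walk.cons h (ih h2)

theorem Walk.reverse {u v : G.V} {l : List G.E} (h : Walk G u v l) : Walk G v u l.reverse := by
  induction h with
  | nil v => simpa using Walk.nil v
  | cons h hw ih =>
    rw [List.reverse_cons]
    exact ih.append (Walk.cons h.symm (Walk.nil _))

theorem conn_of_walk {F : Set G.E} {u v : G.V} {l : List G.E} (h : Walk G u v l)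
    (hF : ∀ e ∈ l, e ∈ F) : G.Conn F u v := by
  induction h with
  | nil _ => exact Relation.ReflTransGen.refl
  | cons h hw ih =>
    exact Relation.ReflTransGen.head ⟨_, hF _ List.mem_cons_self, h⟩
      (ih fun e he => hF e (List.mem_cons_of_mem _ he))

theorem walk_of_conn {F : Set G.E} {u v : G.V} (h : G.Conn F u v) :
    ∃ l, Walk G u v l ∧ ∀ e ∈ l, e ∈ F := by
  induction h with
  | refl => exact ⟨[], Walk.nil _, by simp⟩
  | tail h' step ih =>
    obtain ⟨l, hw, hl⟩ := ih
    obtain ⟨e, heF, ho⟩ := step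
    refine ⟨l ++ [e], hw.append (Walk.cons ho (Walk.nil _)), ?_⟩
    intro f hf
    rcases List.mem_append.1 hf with h | h
    · exact hl f h
    · simp only [List.mem_singleton] at h; subst h; exact heF

theorem walk_split {u v : G.V} {l : List G.E} (h : Walk G u v l) :
    ∀ f, f ∈ l → ∃ l1 l2 x y, l = l1 ++ f :: l2 ∧ Walk G u x l1 ∧ Ortn G f x y ∧
      Walk G y v l2 ∧ f ∉ l1 := by
  induction h with
  | nil w => intro f hf; exact absurd hf List.not_mem_nil
  | @cons u' v' w' e l' ho hw ih =>
    intro f hf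
    by_cases hfe : f = e
    · subst hfe
      exact ⟨[], l', u', v', rfl, Walk.nil u', ho, hw, List.not_mem_nil⟩
    · have hf' : f ∈ l' := by
        rcases List.mem_cons.1 hf with h | h
        · exact absurd h hfe
        · exact h
      obtain ⟨l1, l2, x, y, heq, hw1, ho1, hw2, hf1⟩ := ih f hf'
      refine ⟨e :: l1, l2, x, y, by rw [heq]; rfl, Walk.cons ho hw1, ho1, hw2, ?_⟩
      simp only [List.mem_cons, not_or]
      exact ⟨hfe, hf1⟩

theorem walk_dedup_aux :
    ∀ n (u v : G.V) (l : List G.E), l.length ≤ n → Walk G u v l →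
      ∃ l', Walk G u v l' ∧ l'.Nodup ∧ ∀ e ∈ l', e ∈ l := by
  intro n
  induction n with
  | zero =>
    intro u v l hl hw
    rw [Nat.le_zero, List.length_eq_zero_iff] at hl
    subst hl
    exact ⟨[], hw, List.nodup_nil, fun e he => absurd he List.not_mem_nil⟩
  | succ n ih =>
    intro u v l hl hw
    by_cases hnd : l.Nodup
    · exact ⟨l, hw, hnd, fun _ h => h⟩
    classical
    obtain ⟨f, hdup⟩ := List.exists_duplicate_iff_not_nodup.2 hnd
    obtain ⟨l1, l2, x, y, heq, hw1, ho1, hw2, hf1⟩ := walk_split hw f hdup.mem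
    have hcount : 2 ≤ List.count f l := List.duplicate_iff_two_le_count.1 hdup
    have hf2 : f ∈ l2 := by
      by_contra hf2
      rw [heq] at hcount
      simp [List.count_append, List.count_cons, List.count_eq_zero.2 hf1,
        List.count_eq_zero.2 hf2] at hcount
    obtain ⟨l3, l4, x', y', heq2, hw3, ho2, hw4, -⟩ := walk_split hw2 f hf2
    have hlength : l.length = l1.length + l3.length + l4.length + 2 := by
      rw [heq, heq2]
      simp only [List.length_append, List.length_cons]
      omega
    have finish : ∀ lnew : List G.E, Walk G u v lnew → lnew.length + 1 ≤ l.length →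
        (∀ e ∈ lnew, e ∈ l) → ∃ l', Walk G u v l' ∧ l'.Nodup ∧ ∀ e ∈ l', e ∈ l := by
      intro lnew hwn hlen hmem
      obtain ⟨l', h1, h2, h3⟩ := ih u v lnew (by omega) hwn
      exact ⟨l', h1, h2, fun e he => hmem e (h3 e he)⟩
    have hmemf : ∀ e, e ∈ l1 → e ∈ l := by
      intro e he; rw [heq]; exact List.mem_append.2 (Or.inl he)
    have hmemf4 : ∀ e, e ∈ l4 → e ∈ l := by
      intro e he
      rw [heq, heq2]
      simp only [List.mem_append, List.mem_cons]
      tauto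
    have hmemff : f ∈ l := by rw [heq]; simp
    rcases ho1 with ⟨ha1, hb1⟩ | ⟨ha1, hb1⟩ <;> rcases ho2 with ⟨ha2, hb2⟩ | ⟨ha2, hb2⟩
    · -- src f = x, tgt f = y ; src f = x', tgt f = y'
      refine finish (l1 ++ f :: l4) (hw1.append (Walk.cons (Or.inl ⟨ha1, hb2⟩) hw4)) ?_ ?_
      · simp only [List.length_append, List.length_cons]; omega
      · intro e he
        rcases List.mem_append.1 he with h | h
        · exact hmemf e h
        · rcases List.mem_cons.1 h with h | h
          · subst h; exact hmemff
          · exact hmemf4 e h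
    · -- src f = x, tgt f = y ; src f = y', tgt f = x'
      have hxy : x = y' := ha1.symm.trans ha2
      refine finish (l1 ++ l4) (hw1.append (by rw [hxy]; exact hw4)) ?_ ?_
      · simp only [List.length_append]; omega
      · intro e he
        rcases List.mem_append.1 he with h | h
        · exact hmemf e h
        · exact hmemf4 e h
    · -- src f = y, tgt f = x ; src f = x', tgt f = y'
      have hxy : x = y' := hb1.symm.trans hb2
      refine finish (l1 ++ l4) (hw1.append (by rw [hxy]; exact hw4)) ?_ ?_
      · simp only [List.length_append]; omega
      · intro e he
        rcases List.mem_append.1 he with h | h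
        · exact hmemf e h
        · exact hmemf4 e h
    · -- src f = y, tgt f = x ; src f = y', tgt f = x'
      refine finish (l1 ++ f :: l4) (hw1.append (Walk.cons (Or.inr ⟨ha2, hb1⟩) hw4)) ?_ ?_
      · simp only [List.length_append, List.length_cons]; omega
      · intro e he
        rcases List.mem_append.1 he with h | h
        · exact hmemf e h
        · rcases List.mem_cons.1 h with h | h
          · subst h; exact hmemff
          · exact hmemf4 e h

theorem walk_dedup {u v : G.V} {l : List G.E} (h : Walk G u v l) :
    ∃ l', Walk G u v l' ∧ l'.Nodup ∧ ∀ e ∈ l', e ∈ l :=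
  walk_dedup_aux l.length u v l le_rfl h

/-! ### Sides of an edge -/

theorem partition (hconn : ∀ u v : G.V, G.Conn Set.univ u v) (e : G.E) (v : G.V) :
    G.SS e v (G.src e) ∨ G.SS e v (G.tgt e) := by
  have h : G.Conn Set.univ v (G.src e) := hconn v (G.src e)
  induction h using Relation.ReflTransGen.head_induction_on with
  | refl => exact Or.inl Relation.ReflTransGen.refl
  | head step h' ih =>
    obtain ⟨f, -, ho⟩ := step
    by_cases hf : f = e
    · subst hf
      rcases ho with ⟨h1, -⟩ | ⟨-, h2⟩
      · left; rw [h1]; exact SS.refl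
      · right; rw [h2]; exact SS.refl
    · rcases ih with h | h
      · exact Or.inl (Relation.ReflTransGen.head ⟨f, Set.mem_compl_singleton_iff.mpr hf, ho⟩ h)
      · exact Or.inr (Relation.ReflTransGen.head ⟨f, Set.mem_compl_singleton_iff.mpr hf, ho⟩ h)

theorem twoSides (hconn : ∀ u v : G.V, G.Conn Set.univ u v) {e : G.E} {u v w : G.V}
    (hu : ¬ G.SS e u w) (hv : ¬ G.SS e v w) : G.SS e u v := by
  rcases partition hconn e w with hw | hw
  · have hu' : G.SS e u (G.tgt e) :=
      (partition hconn e u).resolve_left fun h => hu (h.trans hw.symm)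
    have hv' : G.SS e v (G.tgt e) :=
      (partition hconn e v).resolve_left fun h => hv (h.trans hw.symm)
    exact hu'.trans hv'.symm
  · have hu' : G.SS e u (G.src e) :=
      (partition hconn e u).resolve_right fun h => hu (h.trans hw.symm)
    have hv' : G.SS e v (G.src e) :=
      (partition hconn e v).resolve_right fun h => hv (h.trans hw.symm)
    exact hu'.trans hv'.symm

theorem conn_avoid {f e : G.E} {v : G.V}
    (hv1 : ¬ G.SS f v (G.src e)) (hv2 : ¬ G.SS f v (G.tgt e)) :
    ∀ {w : G.V}, G.Conn {f}ᶜ v w → G.Conn ({f}ᶜ ∩ {e}ᶜ) v w := by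
  intro w h
  induction h with
  | refl => exact Relation.ReflTransGen.refl
  | tail hpre step ih =>
    obtain ⟨g, hg, ho⟩ := step
    have hge : g ≠ e := by
      rintro rfl
      rcases ho with ⟨h1, -⟩ | ⟨-, h2⟩
      · exact hv1 (by rw [h1]; exact hpre)
      · exact hv2 (by rw [h2]; exact hpre)
    exact ih.tail ⟨g, ⟨hg, Set.mem_compl_singleton_iff.mpr hge⟩, ho⟩

/-- Laminarity: if `v` is on the side of `f` away from the endpoints of `e`,
then `v` is on the side of `e` containing the endpoints of `f`. -/
theorem lam (hconn : ∀ u v : G.V, G.Conn Set.univ u v) {f e : G.E}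
    (hf : ¬ G.SS f (G.src f) (G.tgt f)) (hef : e ≠ f) {v : G.V}
    (hv : ¬ G.SS f v (G.src e)) : G.SS e v (G.src f) := by
  have hfe : f ≠ e := fun h => hef h.symm
  have hee : G.SS f (G.src e) (G.tgt e) := ss_step hef (Or.inl ⟨rfl, rfl⟩)
  have hv2 : ¬ G.SS f v (G.tgt e) := fun h => hv (h.trans hee.symm)
  by_cases h1 : G.SS f (G.src f) (G.src e)
  · have hvt : G.SS f v (G.tgt f) := by
      rcases partition hconn f v with h | h
      · exact absurd (h.trans h1) hv
      · exact h
    have hc := conn_avoid hv hv2 hvt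
    have h3 : G.SS e v (G.tgt f) := conn_mono Set.inter_subset_right hc
    exact h3.trans (ss_step hfe (Or.inr ⟨rfl, rfl⟩))
  · have hse : G.SS f (G.src e) (G.tgt f) := by
      rcases partition hconn f (G.src e) with h | h
      · exact absurd h.symm h1
      · exact h
    have hvsf : G.SS f v (G.src f) := by
      rcases partition hconn f v with h | h
      · exact h
      · exact absurd (h.trans hse.symm) hv
    exact conn_mono Set.inter_subset_right (conn_avoid hv hv2 hvsf)

/-! ### Non-cut edges and reconnection -/

theorem NC_reconnect {e : G.E} (he : e ∈ NCset G) :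
    G.Conn (NCset G \ {e}) (G.src e) (G.tgt e) := by
  obtain ⟨l, hw, hl⟩ := walk_of_conn (show G.Conn {e}ᶜ (G.src e) (G.tgt e) from he)
  obtain ⟨l', hw', hnd', hsub⟩ := walk_dedup hw
  have hl' : ∀ f ∈ l', f ∈ ({e}ᶜ : Set G.E) := fun f hf => hl f (hsub f hf)
  apply conn_of_walk hw'
  intro f hf
  have hfe : f ≠ e := Set.mem_compl_singleton_iff.1 (hl' f hf)
  refine ⟨?_, hfe⟩
  obtain ⟨l1, l2, x, y, heq, hw1, ho, hw2, hf1⟩ := walk_split hw' f hf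
  have hnd2 : f ∉ l2 := by
    have h := List.nodup_append.1 (heq ▸ hnd')
    exact (List.nodup_cons.1 h.2.1).1
  have hwx : Walk G x y (l1.reverse ++ e :: l2.reverse) :=
    hw1.reverse.append (Walk.cons (Or.inl ⟨rfl, rfl⟩) hw2.reverse)
  have hconnxy : G.Conn {f}ᶜ x y := by
    apply conn_of_walk hwx
    intro g hg
    rw [List.mem_append, List.mem_cons] at hg
    apply Set.mem_compl_singleton_iff.mpr
    rcases hg with hg | hg | hg
    · rw [List.mem_reverse] at hg; exact fun h => hf1 (h ▸ hg)
    · subst hg; exact fun h => hfe h.symm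
    · rw [List.mem_reverse] at hg; exact fun h => hnd2 (h ▸ hg)
  show G.SS f (G.src f) (G.tgt f)
  rcases ho with ⟨h1, h2⟩ | ⟨h1, h2⟩
  · rw [h1, h2]; exact hconnxy
  · rw [h1, h2]; exact hconnxy.symm

theorem nodup_not_mem {f : G.E} {u v : G.V} {l : List G.E}
    (hfNC : f ∉ NCset G) (hw : Walk G u v l) (hnd : l.Nodup) (hss : G.SS f u v) :
    f ∉ l := by
  intro hf
  obtain ⟨l1, l2, x, y, heq, hw1, ho, hw2, hf1⟩ := walk_split hw f hf
  have hf2 : f ∉ l2 := by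
    have h := List.nodup_append.1 (heq ▸ hnd)
    exact (List.nodup_cons.1 h.2.1).1
  have h1 : G.SS f u x :=
    conn_of_walk hw1 fun g hg => Set.mem_compl_singleton_iff.mpr fun h => hf1 (h ▸ hg)
  have h2 : G.SS f y v :=
    conn_of_walk hw2 fun g hg => Set.mem_compl_singleton_iff.mpr fun h => hf2 (h ▸ hg)
  have hxy : G.SS f x y := (h1.symm.trans hss).trans h2.symm
  apply hfNC
  show G.SS f (G.src f) (G.tgt f)
  rcases ho with ⟨ha, hb⟩ | ⟨ha, hb⟩
  · rw [ha, hb]; exact hxy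
  · rw [ha, hb]; exact hxy.symm

theorem sameside_conn (hconn : ∀ u v : G.V, G.Conn Set.univ u v) {u v : G.V}
    (h : ∀ f, f ∉ NCset G → G.SS f u v) : G.Conn (NCset G) u v := by
  obtain ⟨l, hw, -⟩ := walk_of_conn (hconn u v)
  obtain ⟨l', hw', hnd', -⟩ := walk_dedup hw
  apply conn_of_walk hw'
  intro f hf
  by_contra hfNC
  exact nodup_not_mem hfNC hw' hnd' (h f hfNC) hf

/-! ### Component counts -/

def crel (H : Subgraph G) : H.verts → H.verts → Prop :=
  fun u v => G.Step {e ∈ H.edges | G.src e ∈ H.verts ∧ G.tgt e ∈ H.verts} u.1 v.1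

theorem numComponents_def (H : Subgraph G) :
    H.numComponents = Nat.card (Quot (crel H)) := rfl

theorem mk_eq_of_conn {H : Subgraph G} {u v : G.V} (hu : u ∈ H.verts)
    (hc : G.Conn H.edges u v) :
    ∃ hv : v ∈ H.verts, Quot.mk (crel H) ⟨u, hu⟩ = Quot.mk (crel H) ⟨v, hv⟩ := by
  induction hc with
  | refl => exact ⟨hu, rfl⟩
  | tail h' step ih =>
    obtain ⟨hx, heq⟩ := ih
    obtain ⟨f, hfF, ho⟩ := step
    have hsrc := H.src_mem f hfF
    have htgt := H.tgt_mem f hfF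
    rcases ho with ⟨h1, h2⟩ | ⟨h1, h2⟩
    · exact ⟨h2 ▸ htgt, heq.trans (Quot.sound ⟨f, ⟨hfF, hsrc, htgt⟩, Or.inl ⟨h1, h2⟩⟩)⟩
    · exact ⟨h1 ▸ hsrc, heq.trans (Quot.sound ⟨f, ⟨hfF, hsrc, htgt⟩, Or.inr ⟨h1, h2⟩⟩)⟩

theorem conn_mk_eq {H : Subgraph G} (u v : ↥H.verts) (hc : G.Conn H.edges u.1 v.1) :
    Quot.mk (crel H) u = Quot.mk (crel H) v := by
  obtain ⟨hv, h⟩ := mk_eq_of_conn u.2 hc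
  exact h

theorem conn_of_mk_eq {H : Subgraph G} {u v : ↥H.verts}
    (h : Quot.mk (crel H) u = Quot.mk (crel H) v) : G.Conn H.edges u.1 v.1 := by
  have h' := Quot.eqvGen_exact h
  clear h
  induction h' with
  | rel x y hxy =>
    obtain ⟨f, hf, ho⟩ := hxy
    exact Relation.ReflTransGen.single ⟨f, hf.1, ho⟩
  | refl x => exact Relation.ReflTransGen.refl
  | symm x y _ ih => exact conn_symm ih
  | trans x y z _ _ ih1 ih2 => exact ih1.trans ih2

theorem card_one {H : Subgraph G} (hc : H.IsConnected) : H.numComponents = 1 := by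
  rw [numComponents_def, Nat.card_eq_one_iff_unique]
  constructor
  · refine ⟨fun x y => ?_⟩
    induction x using Quot.ind with | _ x => ?_
    induction y using Quot.ind with | _ y => ?_
    exact conn_mk_eq x y (hc.2 x.1 x.2 y.1 y.2)
  · obtain ⟨u, hu⟩ := hc.1
    exact ⟨Quot.mk _ ⟨u, hu⟩⟩

theorem two_le_card {H : Subgraph G} {u v : G.V} (hu : u ∈ H.verts) (hv : v ∈ H.verts)
    (h : ¬ G.Conn H.edges u v) : 2 ≤ H.numComponents := by
  rw [numComponents_def]
  have : Nontrivial (Quot (crel H)) :=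
    ⟨Quot.mk _ ⟨u, hu⟩, Quot.mk _ ⟨v, hv⟩, fun he => h (conn_of_mk_eq he)⟩
  exact Finite.one_lt_card

theorem card_del_eq {H : Subgraph G} {e : G.E}
    (h : G.Conn (H.edges \ {e}) (G.src e) (G.tgt e)) :
    (H.deleteEdge e).numComponents = H.numComponents := by
  rw [numComponents_def, numComponents_def]
  apply Nat.card_congr
  refine ⟨Quot.lift (fun a : ↥H.verts => Quot.mk (crel H) a) ?_,
    Quot.lift (fun a : ↥H.verts => Quot.mk (crel (H.deleteEdge e)) a) ?_,
    fun q => ?_, fun q => ?_⟩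
  · intro a b hab
    obtain ⟨f, hfm, ho⟩ := hab
    obtain ⟨hf1, hf2, hf3⟩ := hfm
    exact Quot.sound ⟨f, ⟨hf1.1, hf2, hf3⟩, ho⟩
  · intro a b hab
    obtain ⟨f, hfm, ho⟩ := hab
    obtain ⟨hf1, hf2, hf3⟩ := hfm
    by_cases hfe : f = e
    · subst hfe
      apply conn_mk_eq (H := H.deleteEdge f) a b
      rcases ho with ⟨h1, h2⟩ | ⟨h1, h2⟩
      · show G.Conn (H.edges \ {f}) a.1 b.1
        rw [← h1, ← h2]; exact h
      · show G.Conn (H.edges \ {f}) a.1 b.1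
        rw [← h2, ← h1]; exact conn_symm h
    · exact Quot.sound ⟨f, ⟨⟨hf1, hfe⟩, hf2, hf3⟩, ho⟩
  · induction q using Quot.ind with | _ a => ?_
    rfl
  · induction q using Quot.ind with | _ a => ?_
    rfl

theorem not_cut_of_reconnect {H : Subgraph G} {e : G.E}
    (h : e ∈ H.edges → G.Conn (H.edges \ {e}) (G.src e) (G.tgt e)) : ¬ H.IsCutEdge e := by
  rintro ⟨he, hlt⟩
  rw [card_del_eq (h he)] at hlt
  exact lt_irrefl _ hlt

theorem top_edges : (top G).edges = (Set.univ : Set G.E) := rfl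

theorem top_connected (hconn : ∀ u v : G.V, G.Conn Set.univ u v) [Nonempty G.V] :
    (top G).IsConnected :=
  ⟨⟨Classical.arbitrary G.V, trivial⟩, fun u _ v _ => hconn u v⟩

theorem cut_iff (hconn : ∀ u v : G.V, G.Conn Set.univ u v) [Nonempty G.V] (e : G.E) :
    (top G).IsCutEdge e ↔ e ∉ NCset G := by
  constructor
  · rintro ⟨-, hlt⟩ hNC
    have hco : G.Conn ((top G).edges \ {e}) (G.src e) (G.tgt e) := by
      have he' : ((top G).edges \ {e} : Set G.E) = {e}ᶜ := by
        rw [top_edges, ← Set.compl_eq_univ_diff]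
      rw [he']
      exact hNC
    rw [card_del_eq hco] at hlt
    exact lt_irrefl _ hlt
  · intro hNC
    refine ⟨trivial, ?_⟩
    rw [card_one (top_connected hconn)]
    refine lt_of_lt_of_le one_lt_two
      (two_le_card (H := (top G).deleteEdge e) (u := G.src e) (v := G.tgt e)
        trivial trivial ?_)
    intro hcc
    apply hNC
    show G.SS e (G.src e) (G.tgt e)
    have he' : ((top G).deleteEdge e).edges = ({e}ᶜ : Set G.E) := by
      show ((top G).edges \ {e} : Set G.E) = {e}ᶜ
      rw [top_edges, ← Set.compl_eq_univ_diff]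
    rw [he'] at hcc
    exact hcc

/-! ### Blobs as components of the non-cut-edge graph -/

def blob (G : MDigraph) (m : G.V) : Subgraph G where
  verts := {v | G.Conn (NCset G) m v}
  edges := {e | e ∈ NCset G ∧ G.Conn (NCset G) m (G.src e)}
  src_mem := fun _ he => he.2
  tgt_mem := fun e he => he.2.tail ⟨e, he.1, Or.inl ⟨rfl, rfl⟩⟩

theorem blob_conn {m u : G.V} (h : G.Conn (NCset G) m u) :
    G.Conn (blob G m).edges m u := by
  induction h with
  | refl => exact Relation.ReflTransGen.refl
  | tail hpre step ih =>
    obtain ⟨f, hfNC, ho⟩ := step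
    have hsrc : G.Conn (NCset G) m (G.src f) := by
      rcases ho with ⟨h1, h2⟩ | ⟨h1, h2⟩
      · rw [h1]; exact hpre
      · rw [h1]; exact hpre.tail ⟨f, hfNC, Or.inr ⟨h1, h2⟩⟩
    exact ih.tail ⟨f, ⟨hfNC, hsrc⟩, ho⟩

theorem blob_conn_del {m x y : G.V} {e : G.E} (hx : G.Conn (NCset G) m x)
    (h : G.Conn (NCset G \ {e}) x y) :
    G.Conn (NCset G) m y ∧ G.Conn ((blob G m).edges \ {e}) x y := by
  induction h with
  | refl => exact ⟨hx, Relation.ReflTransGen.refl⟩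
  | tail hpre step ih =>
    obtain ⟨hw, hc⟩ := ih
    obtain ⟨f, hfm, ho⟩ := step
    obtain ⟨hfNC, hfe⟩ := hfm
    have hz : G.Conn (NCset G) m _ := hw.tail ⟨f, hfNC, ho⟩
    have hsrc : G.Conn (NCset G) m (G.src f) := by
      rcases ho with ⟨h1, -⟩ | ⟨h1, -⟩
      · rw [h1]; exact hw
      · rw [h1]; exact hz
    exact ⟨hz, hc.tail ⟨f, ⟨⟨hfNC, hsrc⟩, hfe⟩, ho⟩⟩

theorem blob_isBlob (hconn : ∀ u v : G.V, G.Conn Set.univ u v) (m : G.V) :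
    IsBlobIn (top G) (blob G m) := by
  refine ⟨⟨Set.subset_univ _, Set.subset_univ _⟩,
    ⟨⟨m, Relation.ReflTransGen.refl⟩, ?_⟩, ?_, ?_⟩
  · intro u hu v hv
    exact (conn_symm (blob_conn hu)).trans (blob_conn hv)
  · intro e
    apply not_cut_of_reconnect
    intro he
    exact (blob_conn_del he.2 (NC_reconnect he.1)).2
  · intro B' _ hBc hBnc hle
    have hedges : B'.edges ⊆ NCset G := by
      intro f hf
      by_contra hfNC
      apply hBnc f
      refine ⟨hf, ?_⟩
      rw [card_one hBc]
      refine lt_of_lt_of_le one_lt_two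
        (two_le_card (H := B'.deleteEdge f) (B'.src_mem f hf) (B'.tgt_mem f hf) ?_)
      intro hcc
      exact hfNC (conn_mono (fun g hg => hg.2) hcc)
    have hm' : m ∈ B'.verts := hle.1 Relation.ReflTransGen.refl
    constructor
    · intro v hv
      exact conn_mono hedges (hBc.2 m hm' v hv)
    · intro f hf
      exact ⟨hedges hf, conn_mono hedges (hBc.2 m hm' _ (B'.src_mem f hf))⟩

/-! ### Majority sides and the median blob -/

open Classical in
/-- An anchor vertex for the majority side (the side with at least three of
the four taxa) of an edge. -/
noncomputable def anch (G : MDigraph) (la lb lc : G.V) (e : G.E) : G.V :=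
  if G.SS e la lb then la else lc

theorem min1core (hconn : ∀ u v : G.V, G.Conn Set.univ u v)
    (e : G.E) (la lb lc ld : G.V)
    (e1 : ¬(G.SS e la lb ∧ G.SS e lc ld ∧ ¬ G.SS e la lc))
    (e2 : ¬(G.SS e la lc ∧ G.SS e lb ld ∧ ¬ G.SS e la lb))
    (e3 : ¬(G.SS e la ld ∧ G.SS e lb lc ∧ ¬ G.SS e la lb)) :
    (G.SS e la (anch G la lb lc e) ∨ G.SS e lb (anch G la lb lc e)) ∧
    (G.SS e la (anch G la lb lc e) ∨ G.SS e lc (anch G la lb lc e)) ∧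
    (G.SS e la (anch G la lb lc e) ∨ G.SS e ld (anch G la lb lc e)) ∧
    (G.SS e lb (anch G la lb lc e) ∨ G.SS e lc (anch G la lb lc e)) ∧
    (G.SS e lb (anch G la lb lc e) ∨ G.SS e ld (anch G la lb lc e)) ∧
    (G.SS e lc (anch G la lb lc e) ∨ G.SS e ld (anch G la lb lc e)) := by
  by_cases hab : G.SS e la lb
  · simp only [anch, if_pos hab]
    refine ⟨Or.inl SS.refl, Or.inl SS.refl, Or.inl SS.refl,
      Or.inl hab.symm, Or.inl hab.symm, ?_⟩
    by_contra hcd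
    push_neg at hcd
    obtain ⟨hc, hd⟩ := hcd
    exact e1 ⟨hab, twoSides hconn hc hd, fun h => hc h.symm⟩
  · simp only [anch, if_neg hab]
    refine ⟨?_, Or.inr SS.refl, ?_, Or.inr SS.refl, ?_, Or.inl SS.refl⟩
    · by_contra hh
      push_neg at hh
      obtain ⟨ha, hb⟩ := hh
      exact hab (twoSides hconn ha hb)
    · by_contra hh
      push_neg at hh
      obtain ⟨ha, hd⟩ := hh
      have had' : G.SS e la ld := twoSides hconn ha hd
      by_cases hbc' : G.SS e lb lc
      · exact e3 ⟨had', hbc', hab⟩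
      · exact hab (twoSides hconn ha hbc')
    · by_contra hh
      push_neg at hh
      obtain ⟨hb, hd⟩ := hh
      have hbd' : G.SS e lb ld := twoSides hconn hb hd
      by_cases hac' : G.SS e la lc
      · exact e2 ⟨hac', hbd', hab⟩
      · exact hab (twoSides hconn hac' hb)

theorem median (hconn : ∀ u v : G.V, G.Conn Set.univ u v) [Nonempty G.V]
    (la lb lc ld : G.V)
    (hsix : ∀ e, e ∉ NCset G →
      (G.SS e la (anch G la lb lc e) ∨ G.SS e lb (anch G la lb lc e)) ∧
      (G.SS e la (anch G la lb lc e) ∨ G.SS e lc (anch G la lb lc e)) ∧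
      (G.SS e la (anch G la lb lc e) ∨ G.SS e ld (anch G la lb lc e)) ∧
      (G.SS e lb (anch G la lb lc e) ∨ G.SS e lc (anch G la lb lc e)) ∧
      (G.SS e lb (anch G la lb lc e) ∨ G.SS e ld (anch G la lb lc e)) ∧
      (G.SS e lc (anch G la lb lc e) ∨ G.SS e ld (anch G la lb lc e))) :
    ∃ m : G.V, ∀ e, e ∉ NCset G → G.SS e m (anch G la lb lc e) := by
  classical
  obtain ⟨m, hm⟩ := Finite.exists_max (fun v : G.V =>
    Set.ncard {e : G.E | e ∉ NCset G ∧ G.SS e v (anch G la lb lc e)})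
  refine ⟨m, fun f hf => ?_⟩
  by_contra hmf
  have hfcut : ¬ G.SS f (G.src f) (G.tgt f) := hf
  have hw : ∃ w, (G.src f = w ∨ G.tgt f = w) ∧ G.SS f w (anch G la lb lc f) := by
    rcases partition hconn f (anch G la lb lc f) with h | h
    · exact ⟨G.src f, Or.inl rfl, h.symm⟩
    · exact ⟨G.tgt f, Or.inr rfl, h.symm⟩
  obtain ⟨w, hwend, hwmaj⟩ := hw
  have hsubset : ∀ e, e ∉ NCset G → G.SS e m (anch G la lb lc e) →
      G.SS e w (anch G la lb lc e) := by
    intro e he hme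
    by_contra hwe
    have hef : e ≠ f := by rintro rfl; exact hmf hme
    have hff : G.SS e (G.src f) (G.tgt f) := ss_step (fun h => hef h.symm) (Or.inl ⟨rfl, rfl⟩)
    have hw_ends : ¬ G.SS e (G.src f) (anch G la lb lc e) := by
      intro hx
      apply hwe
      rcases hwend with h | h
      · rw [← h]; exact hx
      · rw [← h]; exact hff.symm.trans hx
    by_cases hcase : G.SS f (G.src e) (anch G la lb lc f)
    · have hv : ¬ G.SS f m (G.src e) := fun hx => hmf (hx.trans hcase)
      have hLAM := lam hconn hfcut hef hv
      exact hw_ends (hLAM.symm.trans hme)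
    · have hdisj : ∀ v, G.SS f v (anch G la lb lc f) → ¬ G.SS e v (anch G la lb lc e) := by
        intro v hvf hve
        have hvx : ¬ G.SS f v (G.src e) := fun hx => hcase (hx.symm.trans hvf)
        have hL := lam hconn hfcut hef hvx
        exact hw_ends (hL.symm.trans hve)
      obtain ⟨g1, g2, -, g4, -, -⟩ := hsix e he
      obtain ⟨f1, f2, -, f4, -, -⟩ := hsix f hf
      by_cases h1 : G.SS e la (anch G la lb lc e)
      · by_cases h2 : G.SS f la (anch G la lb lc f)
        · exact hdisj la h2 h1
        · have hfb := f1.resolve_left h2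
          have hfc := f2.resolve_left h2
          by_cases h3 : G.SS e lb (anch G la lb lc e)
          · exact hdisj lb hfb h3
          · exact hdisj lc hfc (g4.resolve_left h3)
      · have heb := g1.resolve_left h1
        have hec := g2.resolve_left h1
        by_cases h2 : G.SS f lb (anch G la lb lc f)
        · exact hdisj lb h2 heb
        · exact hdisj lc (f4.resolve_left h2) hec
  have hsub : {e : G.E | e ∉ NCset G ∧ G.SS e m (anch G la lb lc e)} ⊆
      {e : G.E | e ∉ NCset G ∧ G.SS e w (anch G la lb lc e)} := by
    rintro e ⟨he, hme⟩
    exact ⟨he, hsubset e he hme⟩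
  have hstrict := (Set.ssubset_iff_of_subset hsub).2
    ⟨f, ⟨hf, hwmaj⟩, fun hmem => hmf hmem.2⟩
  have hlt := Set.ncard_lt_ncard hstrict (Set.toFinite _)
  exact absurd (hm w) (not_le.mpr hlt)

/-! ### The main construction -/

theorem main_gen {X : Type} (G : MDigraph) (leaf : X → G.V)
    (hconn : ∀ u v : G.V, G.Conn Set.univ u v) [Nonempty G.V]
    (a b c d : X)
    (lab : leaf a ≠ leaf b) (lac : leaf a ≠ leaf c) (lad : leaf a ≠ leaf d)
    (lbc : leaf b ≠ leaf c) (lbd : leaf b ≠ leaf d) (lcd : leaf c ≠ leaf d)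
    (hpend : ∀ s : X, s = a ∨ s = b ∨ s = c ∨ s = d →
      (∀ e, G.src e ≠ leaf s) ∧
      ∃ es, G.tgt es = leaf s ∧ ∀ e, G.tgt e = leaf s → e = es)
    (hC1 : ¬ CutSep (top G) leaf a b c d)
    (hC2 : ¬ CutSep (top G) leaf a c b d)
    (hC3 : ¬ CutSep (top G) leaf a d b c) :
    BQuartetIn (top G) leaf a b c d := by
  classical
  have hconv : ∀ (e : G.E) (u v : G.V),
      G.Conn ((top G).edges \ {e}) u v ↔ G.SS e u v := by
    intro e u v
    rw [top_edges, ← Set.compl_eq_univ_diff]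
    exact Iff.rfl
  have hcutE : ∀ e, e ∉ NCset G → (top G).IsCutEdge e :=
    fun e he => (cut_iff hconn e).mpr he
  have excl1 : ∀ e, e ∉ NCset G →
      ¬(G.SS e (leaf a) (leaf b) ∧ G.SS e (leaf c) (leaf d) ∧
        ¬ G.SS e (leaf a) (leaf c)) := by
    rintro e he ⟨h1, h2, h3⟩
    exact hC1 ⟨e, hcutE e he, (hconv e _ _).2 h1, (hconv e _ _).2 h2,
      fun hc => h3 ((hconv e _ _).1 hc)⟩
  have excl2 : ∀ e, e ∉ NCset G →
      ¬(G.SS e (leaf a) (leaf c) ∧ G.SS e (leaf b) (leaf d) ∧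
        ¬ G.SS e (leaf a) (leaf b)) := by
    rintro e he ⟨h1, h2, h3⟩
    exact hC2 ⟨e, hcutE e he, (hconv e _ _).2 h1, (hconv e _ _).2 h2,
      fun hc => h3 ((hconv e _ _).1 hc)⟩
  have excl3 : ∀ e, e ∉ NCset G →
      ¬(G.SS e (leaf a) (leaf d) ∧ G.SS e (leaf b) (leaf c) ∧
        ¬ G.SS e (leaf a) (leaf b)) := by
    rintro e he ⟨h1, h2, h3⟩
    exact hC3 ⟨e, hcutE e he, (hconv e _ _).2 h1, (hconv e _ _).2 h2,
      fun hc => h3 ((hconv e _ _).1 hc)⟩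
  have hsix := fun e he => min1core hconn e (leaf a) (leaf b) (leaf c) (leaf d)
    (excl1 e he) (excl2 e he) (excl3 e he)
  have hmin1' : ∀ e, e ∉ NCset G → ∀ s t : X, (s = a ∨ s = b ∨ s = c ∨ s = d) →
      (t = a ∨ t = b ∨ t = c ∨ t = d) → s ≠ t →
      G.SS e (leaf s) (anch G (leaf a) (leaf b) (leaf c) e) ∨
      G.SS e (leaf t) (anch G (leaf a) (leaf b) (leaf c) e) := by
    intro e he s t hs ht hst
    obtain ⟨m1, m2, m3, m4, m5, m6⟩ := hsix e he
    rcases hs with rfl | rfl | rfl | rfl <;> rcases ht with rfl | rfl | rfl | rfl <;>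
      first
      | exact absurd rfl hst
      | exact Or.symm m1 | exact m1 | exact Or.symm m2 | exact m2
      | exact Or.symm m3 | exact m3 | exact Or.symm m4 | exact m4
      | exact Or.symm m5 | exact m5 | exact Or.symm m6 | exact m6
  obtain ⟨m, med⟩ := median hconn (leaf a) (leaf b) (leaf c) (leaf d) hsix
  refine ⟨blob G m, blob_isBlob hconn m, ?_⟩
  intro s hs t ht hst hcontra
  simp only [Set.mem_insert_iff, Set.mem_singleton_iff] at hs ht
  obtain ⟨hsrc_s, es, hes_tgt, hes_uniq⟩ := hpend s hs
  -- the side of the pendant edge of `s` containing `leaf s` is a singleton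
  have hside_s : ∀ x, G.SS es x (leaf s) → x = leaf s := by
    intro x hx
    have hx' : G.Conn {es}ᶜ (leaf s) x := conn_symm hx
    rcases Relation.ReflTransGen.cases_head hx' with heq | ⟨y, hstep, -⟩
    · exact heq.symm
    · obtain ⟨f, hfm, ho⟩ := hstep
      exfalso
      rcases ho with ⟨h1, -⟩ | ⟨-, h2⟩
      · exact hsrc_s f h1
      · exact Set.mem_compl_singleton_iff.1 hfm (hes_uniq f h2)
  have hcut_es : es ∉ NCset G := by
    intro hNC
    have hNC' : G.SS es (G.src es) (leaf s) := by
      rw [← hes_tgt]; exact hNC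
    exact hsrc_s es (hside_s _ hNC')
  -- the median is not on the singleton side
  have hm_not : ¬ G.SS es m (leaf s) := by
    intro hm
    have hm' : m = leaf s := hside_s m hm
    have hmaj := med es hcut_es
    rw [hm'] at hmaj
    have hanch : anch G (leaf a) (leaf b) (leaf c) es = leaf s := hside_s _ hmaj.symm
    by_cases hab' : G.SS es (leaf a) (leaf b)
    · have ha' : leaf a = leaf s := by
        have h := hanch
        simp only [anch, if_pos hab'] at h
        exact h
      have hb' : leaf b = leaf s := hside_s _ (ha' ▸ hab'.symm)
      exact lab (ha'.trans hb'.symm)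
    · have hc' : leaf c = leaf s := by
        have h := hanch
        simp only [anch, if_neg hab'] at h
        exact h
      obtain ⟨m1, -⟩ := hsix es hcut_es
      rcases m1 with h | h
      · rw [hanch] at h
        exact lac ((hside_s _ h).trans hc'.symm)
      · rw [hanch] at h
        exact lbc ((hside_s _ h).trans hc'.symm)
  -- maximal side avoiding the median, containing `leaf s`
  have hfam_ne : {v | G.SS es v (leaf s)} ∈
      {D : Set G.V | ∃ g, g ∉ NCset G ∧ D = {v | G.SS g v (leaf s)} ∧ m ∉ D} :=
    ⟨es, hcut_es, rfl, hm_not⟩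
  obtain ⟨D, hD, hmax⟩ : ∃ D ∈ {D : Set G.V | ∃ g, g ∉ NCset G ∧ D = {v | G.SS g v (leaf s)} ∧ m ∉ D},
      ∀ D' ∈ {D : Set G.V | ∃ g, g ∉ NCset G ∧ D = {v | G.SS g v (leaf s)} ∧ m ∉ D}, D ⊆ D' → D = D' := by
    obtain ⟨D, hD⟩ := Set.Finite.exists_maximal (Set.toFinite {D : Set G.V | ∃ g, g ∉ NCset G ∧ D = {v | G.SS g v (leaf s)} ∧ m ∉ D}) ⟨_, hfam_ne⟩
    exact ⟨D, hD.1, fun D' hD' hle => le_antisymm hle (hD.2 hD' hle)⟩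
  obtain ⟨g, hgNC, hDeq, hmD⟩ := hD
  subst hDeq
  have hgcutP : ¬ G.SS g (G.src g) (G.tgt g) := hgNC
  have hmD' : ¬ G.SS g m (leaf s) := hmD
  -- endpoints of g: z' on the side of `leaf s`, z on the side of `m`
  obtain ⟨z, z', hozz, hz'side, hzside⟩ :
      ∃ z z', Ortn G g z z' ∧ G.SS g z' (leaf s) ∧ ¬ G.SS g z (leaf s) := by
    rcases partition hconn g (leaf s) with h | h
    · exact ⟨G.tgt g, G.src g, Or.inr ⟨rfl, rfl⟩, h.symm,
        fun hx => hgcutP (h.symm.trans hx.symm)⟩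
    · exact ⟨G.src g, G.tgt g, Or.inl ⟨rfl, rfl⟩, h.symm,
        fun hx => hgcutP (hx.trans h)⟩
  -- z is in the median blob
  have hz_blob : G.Conn (NCset G) m z := by
    apply sameside_conn hconn
    intro h hhNC
    by_contra hms
    by_cases hhg : h = g
    · subst hhg
      exact hms (twoSides hconn hmD' hzside)
    · have hsg_z : G.SS h (G.src g) z := by
        rcases hozz with ⟨h1, h2⟩ | ⟨h1, h2⟩
        · rw [h1]; exact SS.refl
        · have hgg : G.SS h (G.src g) (G.tgt g) :=
            ss_step (fun hh => hhg hh.symm) (Or.inl ⟨rfl, rfl⟩)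
          rw [h2] at hgg
          exact hgg
      by_cases hcase : G.SS g (G.src h) (leaf s)
      · have hv : ¬ G.SS g m (G.src h) := fun hx => hmD' (hx.trans hcase)
        have hL := lam hconn hgcutP hhg hv
        exact hms (hL.trans hsg_z)
      · have hsub : ∀ v, G.SS g v (leaf s) → G.SS h v (G.src g) := by
          intro v hv
          have hvx : ¬ G.SS g v (G.src h) := fun hx => hcase (hx.symm.trans hv)
          exact lam hconn hgcutP hhg hvx
        have hls : G.SS h (leaf s) (G.src g) := hsub _ SS.refl
        have hzZ : G.SS h z (leaf s) := hsg_z.symm.trans hls.symm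
        have hmZ : ¬ G.SS h m (leaf s) := fun hx => hms (hx.trans hzZ.symm)
        have hZfam : {v | G.SS h v (leaf s)} ∈
            {D : Set G.V | ∃ g, g ∉ NCset G ∧ D = {v | G.SS g v (leaf s)} ∧ m ∉ D} :=
          ⟨h, hhNC, rfl, hmZ⟩
        have hDZ : ({v | G.SS g v (leaf s)} : Set G.V) ⊆ {v | G.SS h v (leaf s)} :=
          fun v hv => (hsub v hv).trans hls.symm
        have heqZ := hmax _ hZfam hDZ
        have hzD : z ∈ ({v | G.SS g v (leaf s)} : Set G.V) := by
          rw [show ({v | G.SS g v (leaf s)} : Set G.V) = {v | G.SS h v (leaf s)} from heqZ]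
          exact hzZ
        exact hzside hzD
  have hz'_not : ¬ G.Conn (NCset G) m z' := by
    intro hz'
    have hmz' : G.SS g m z' :=
      conn_mono (fun e' he' => Set.mem_compl_singleton_iff.mpr
        (fun hh => hgNC (by rw [← hh]; exact he'))) hz'
    exact hmD' (hmz'.trans hz'side)
  have hInc : IncidentCut (top G) (blob G m) g := by
    refine ⟨(cut_iff hconn g).mpr hgNC, ?_⟩
    rcases hozz with ⟨h1, h2⟩ | ⟨h1, h2⟩
    · left
      constructor
      · show G.Conn (NCset G) m (G.src g); rw [h1]; exact hz_blob
      · show ¬ G.Conn (NCset G) m (G.tgt g); rw [h2]; exact hz'_not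
    · right
      constructor
      · show G.Conn (NCset G) m (G.tgt g); rw [h2]; exact hz_blob
      · show ¬ G.Conn (NCset G) m (G.src g); rw [h1]; exact hz'_not
  -- every vertex reachable from `leaf s` avoiding incident cut edges stays in D
  have hreach : ∀ x, G.Conn {e ∈ (top G).edges | ¬ IncidentCut (top G) (blob G m) e}
      (leaf s) x → G.SS g x (leaf s) := by
    intro x hx
    induction hx with
    | refl => exact SS.refl
    | tail hpre step ih =>
      obtain ⟨f, hfF, ho⟩ := step
      have hfg : f ≠ g := fun hh => hfF.2 (hh.symm ▸ hInc)
      exact (ss_step hfg ho.symm).trans ih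
  have htD : G.SS g (leaf t) (leaf s) := hreach _ hcontra
  have hmanch := med g hgNC
  rcases hmin1' g hgNC s t hs ht hst with h | h
  · exact hmD' (hmanch.trans h.symm)
  · exact hmD' ((hmanch.trans h.symm).trans htD)

end MDigraph

/-- Let `N⁺` be a rooted binary phylogenetic network on taxon set `X` with
`|X| ≥ 4`, and let `{a,b,c,d} ⊆ X` be four distinct taxa not forming a
B-quartet on `N⁺`.  Then there is an edge of the tree of blobs of `N⁻` —
equivalently a cut edge of the network — whose deletion disconnects exactly
two of the taxa `a,b,c,d` from the other two; consequently the reduced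
unrooted tree of blobs `T_rd(N⁻)` displays a resolved quartet tree on
`{a,b,c,d}` (one of `ab|cd`, `ac|bd`, `ad|bc`). -/
theorem stmt_11 {X : Type} (N : PhyloNetwork X) (a b c d : X)
    (hpair : List.Pairwise (· ≠ ·) [a, b, c, d])
    (hT : ¬ BQuartetIn (top N.toMDigraph) N.leaf a b c d) :
    CutSep (top N.toMDigraph) N.leaf a b c d ∨
    CutSep (top N.toMDigraph) N.leaf a c b d ∨
    CutSep (top N.toMDigraph) N.leaf a d b c := by
    classical
  by_contra hgoal
  push_neg at hgoal
  obtain ⟨hC1, hC2, hC3⟩ := hgoal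
  have hp : (a ≠ b ∧ a ≠ c ∧ a ≠ d) ∧ (b ≠ c ∧ b ≠ d) ∧ c ≠ d := by
    simpa using hpair
  obtain ⟨⟨hab, hac, had⟩, ⟨hbc, hbd⟩, hcd⟩ := hp
  haveI : Nonempty N.toMDigraph.V := ⟨N.root⟩
  have hpend : ∀ s : X, s = a ∨ s = b ∨ s = c ∨ s = d →
      (∀ e, N.toMDigraph.src e ≠ N.leaf s) ∧
      ∃ es, N.toMDigraph.tgt es = N.leaf s ∧
        ∀ e, N.toMDigraph.tgt e = N.leaf s → e = es := by
    intro s _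
    constructor
    · intro e he
      have h0 : Nat.card {e : N.toMDigraph.E // N.toMDigraph.src e = N.leaf s} = 0 :=
        N.leaf_out s
      have hie : IsEmpty {e : N.toMDigraph.E // N.toMDigraph.src e = N.leaf s} := by
        rcases Nat.card_eq_zero.1 h0 with h | h
        · exact h
        · exact absurd h (not_infinite_iff_finite.2 inferInstance)
      exact hie.false ⟨e, he⟩
    · have h1 : Nat.card {e : N.toMDigraph.E // N.toMDigraph.tgt e = N.leaf s} = 1 :=
        N.leaf_in s
      obtain ⟨hsub, hne⟩ := Nat.card_eq_one_iff_unique.1 h1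
      obtain ⟨⟨es, hes⟩⟩ := hne
      refine ⟨es, hes, fun e he => ?_⟩
      exact congrArg Subtype.val (hsub.allEq ⟨e, he⟩ ⟨es, hes⟩)
  exact hT (MDigraph.main_gen N.toMDigraph N.leaf N.conn a b c d
    (fun h => hab (N.leaf_inj h)) (fun h => hac (N.leaf_inj h)) (fun h => had (N.leaf_inj h))
    (fun h => hbc (N.leaf_inj h)) (fun h => hbd (N.leaf_inj h)) (fun h => hcd (N.leaf_inj h))
    hpend hC1 hC2 hC3)
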